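/- For every multi-index α there exists a constant A > 0 such that |G_α(z)| ≤ A·|z| for every z ∈ ℂ with Re z ≥ 0. -/

import Mathlib

open scoped BigOperators

/-- A multi-index: a nonempty finite sequence of positive integers. -/
def MIdx (α : List ℕ) : Prop := α ≠ [] ∧ ∀ a ∈ α, 1 ≤ a

/-- The set `S_m(α) = {α₁, α₁+α₂, …, α₁+⋯+α_{s-1}} ⊆ {1,…,m-1}` of proper partial sums. -/
def boundarySet (α : List ℕ) : Finset ℕ :=
  (((List.scanl (· + ·) 0 α).drop 1).dropLast).toFinset

def diffAux : ℕ → List ℕ → List ℕ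
  | _, [] => []
  | p, a :: t => (a - p) :: diffAux a t

/-- The dual multi-index `α*`. -/
def dualIdx (α : List ℕ) : List ℕ :=
  diffAux 0 ((insert α.sum (Finset.Icc 1 (α.sum - 1) \ boundarySet α)).sort (· ≤ ·))

/-- The finite multiple harmonic sum
`S_α(n) = Σ_{n > n₁ ≥ ⋯ ≥ n_s ≥ 0} 1/((n₁+1)^{α₁} ⋯ (n_s+1)^{α_s})`. -/
noncomputable def hsum : List ℕ → ℕ → ℝ
  | [], _ => 1
  | a :: t, n => ∑ m ∈ Finset.range n, (1 / ((m : ℝ) + 1) ^ a) * hsum t (m + 1)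

open Classical in
/-- The summand of the multiple series `G_α(z)`, indexed by tuples
`v : Fin |α| → ℕ`; it vanishes unless all `v j` are positive and the chain of
comparisons dictated by `α` holds (strict within blocks, weak between blocks). -/
noncomputable def Gterm (α : List ℕ) (z : ℂ) (v : Fin α.sum → ℕ) : ℂ :=
  if (∀ j, 0 < v j) ∧ (∀ j k : Fin α.sum, (k : ℕ) = (j : ℕ) + 1 →
        (if (k : ℕ) ∈ boundarySet α then v k ≤ v j else v k < v j))
  then ∏ j : Fin α.sum, (if (j : ℕ) = 0 then (1 / (v j : ℂ) - 1 / ((v j : ℂ) + z))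
             else if (j : ℕ) ∈ boundarySet α then 1 / ((v j : ℂ) + z)
             else 1 / (v j : ℂ))
  else 0

/-- The multiple series `G_α(z)`. -/
noncomputable def Gfun (α : List ℕ) (z : ℂ) : ℂ := ∑' v : Fin α.sum → ℕ, Gterm α z v

/-- `⁻α` : remove 1 from the first entry. -/
def lminus (α : List ℕ) : List ℕ :=
  match α with
  | [] => []
  | a :: t => if 2 ≤ a then (a - 1) :: t else t

/-- `α⁻` : remove 1 from the last entry. -/
def rminus (α : List ℕ) : List ℕ :=
  if 2 ≤ α.getLastD 0 then α.dropLast ++ [α.getLastD 0 - 1] else α.dropLast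

/-- The difference operator `(Δa)(n) = a(n) - a(n+1)`. -/
def delOp (a : ℕ → ℂ) : ℕ → ℂ := fun n => a n - a (n + 1)

/-- The inversion operator `(∇a)(n) = (Δⁿa)(0)`. -/
def nablaOp (a : ℕ → ℂ) : ℕ → ℂ := fun n => delOp^[n] a 0

/-- The generalized binomial coefficient `z(z-1)⋯(z-n+1)/n!`. -/
noncomputable def cbinom (z : ℂ) (n : ℕ) : ℂ :=
  (∏ i ∈ Finset.range n, (z - (i : ℂ))) / (n.factorial : ℂ)

/-- The Newton series with coefficients `c` converges at `z` to `L`. -/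
def NewtonSeriesTo (c : ℕ → ℂ) (z L : ℂ) : Prop :=
  Filter.Tendsto (fun N => ∑ n ∈ Finset.range N, (-1 : ℂ) ^ n * c n * cbinom z n)
    Filter.atTop (nhds L)

/-- The Newton series interpolating the sequence `a` converges at `z` to `L`. -/
def NewtonSumsTo (a : ℕ → ℂ) (z L : ℂ) : Prop := NewtonSeriesTo (nablaOp a) z L

open Classical in
/-- `ζ_α(μ)` : the nested sum over tuples patterned on `α` with exponents `μ`. -/
noncomputable def zetaIdx (α : List ℕ) (μ : List ℕ) : ℝ :=
  ∑' v : Fin α.sum → ℕ,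
    if (∀ j, 0 < v j) ∧ (∀ j k : Fin α.sum, (k : ℕ) = (j : ℕ) + 1 →
          (if (k : ℕ) ∈ boundarySet α then v k ≤ v j else v k < v j))
    then ∏ j : Fin α.sum, (1 : ℝ) / (v j : ℝ) ^ (μ.getD (j : ℕ) 1)
    else 0

/-- The multiple zeta value `ζ(μ) = ζ_{(p)}(μ)`. -/
noncomputable def MZV (μ : List ℕ) : ℝ := zetaIdx [μ.length] μ

/-- `⁺μ` : add 1 to the first entry. -/
def mplus : List ℕ → List ℕ
  | [] => []
  | a :: t => (a + 1) :: t

/-- `ζ` extended ℚ-linearly to the vector space with basis the multi-indices. -/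
noncomputable def zetaLin (v : List ℕ →₀ ℚ) : ℝ := v.sum fun μ c => (c : ℝ) * MZV μ

/-- `ζ⁺(μ) = ζ(⁺μ)`, extended ℚ-linearly. -/
noncomputable def zetaPlusLin (v : List ℕ →₀ ℚ) : ℝ := v.sum fun μ c => (c : ℝ) * MZV (mplus μ)

/-- All ways of splitting a list into consecutive nonempty blocks. -/
def splits : List ℕ → List (List (List ℕ))
  | [] => [[]]
  | a :: t =>
      (splits t).map (fun c => [a] :: c) ++
      (splits t).filterMap (fun c =>
        match c with
        | [] => none
        | b :: r => some ((a :: b) :: r))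

/-- `d(α) = Σ_{β ≤ α} β`, the sum over all coarsenings of `α`. -/
noncomputable def dmap (α : List ℕ) : List ℕ →₀ ℚ :=
  ((splits α).map fun c => Finsupp.single (c.map List.sum) (1 : ℚ)).sum

/-- All compositions of `n` into positive parts. -/
def comps : ℕ → List (List ℕ)
  | 0 => [[]]
  | n + 1 => (List.range (n + 1)).flatMap fun j => (comps (n - j)).map fun c => (j + 1) :: c

/-- All refinements of `α`. -/
def refts : List ℕ → List (List ℕ)
  | [] => [[]]
  | a :: t => (comps a).flatMap fun c => (refts t).map fun β => c ++ β

/-- `u(α) = Σ_{β ≥ α} β`, the sum over all refinements of `α`. -/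
noncomputable def umap (α : List ℕ) : List ℕ →₀ ℚ :=
  ((refts α).map fun β => Finsupp.single β (1 : ℚ)).sum

/-- The harmonic (quasi-shuffle) product on multi-indices, with values in the
ℚ-vector space with basis the multi-indices. -/
noncomputable def hprod : List ℕ → List ℕ → (List ℕ →₀ ℚ)
  | [], u => Finsupp.single u 1
  | a :: s, [] => Finsupp.single (a :: s) 1
  | a :: s, b :: t =>
      Finsupp.mapDomain (List.cons a) (hprod s (b :: t)) +
      Finsupp.mapDomain (List.cons b) (hprod (a :: s) t) +
      Finsupp.mapDomain (List.cons (a + b)) (hprod s t)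
  termination_by l₁ l₂ => l₁.length + l₂.length

/-- `α ⊛ β = (α₁+β₁) # (⁻α ∗ ⁻β)`. -/
noncomputable def circAst : List ℕ → List ℕ → (List ℕ →₀ ℚ)
  | a :: s, b :: t =>
      Finsupp.mapDomain (List.cons (a + b)) (hprod (lminus (a :: s)) (lminus (b :: t)))
  | _, _ => 0

/-- `⊛` extended linearly in the first argument. -/
noncomputable def circAstLin (v : List ℕ →₀ ℚ) (β : List ℕ) : List ℕ →₀ ℚ :=
  v.sum fun γ c => c • circAst γ β

/-- The exponent list `(k₁+1,1,…,1, k₂+1,1,…,1, …, k_s+1,1,…,1)`, the `i`-th block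
having length `α_i`. -/
def blockList (α : List ℕ) (ks : Fin α.length → ℕ) : List ℕ :=
  (List.ofFn fun i => (ks i + 1) :: List.replicate (α.get i - 1) 1).flatten

/-- `Q_r(n₁,…,n_r; z) = 1/((n₁+z)⋯(n_r+z))`, with `Q_0 = 1`. -/
noncomputable def Qprod (l : List ℕ) (z : ℂ) : ℂ := (l.map fun n => 1 / ((n : ℂ) + z)).prod

/-- `R_r(n₁,…,n_r) = 1/(n₁⋯n_r)`, with `R_0 = 1`. -/
noncomputable def Rprod (l : List ℕ) : ℂ := (l.map fun n => 1 / (n : ℂ)).prod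

/-- A block of `len` variables of factor type `fTy` (1 = Q-type, 2 = R-type); the first
carries the comparison `joinWeak` to the previous variable, subsequent ones carry the
block-internal comparison (weak inside Q-blocks, strict inside R-blocks). -/
def blockPart (fTy : ℕ) (joinWeak : Bool) : ℕ → List (ℕ × Bool)
  | 0 => []
  | m + 1 => (fTy, joinWeak) :: List.replicate m (fTy, fTy == 1)

/-- The word of (factor type, comparison) pairs describing a `Φ`-sum: `qr` is the
weakness of the `□'` joins (Q-block to R-block) and `rq` that of the `□` joins
(R-block to next Q-block). -/
def mkWord (qr rq : Bool) (gs : List (ℕ × ℕ)) : List (ℕ × Bool) :=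
  gs.flatMap fun g => blockPart 1 rq g.1 ++ blockPart 2 qr g.2

/-- The word of a `Φ`-sum: the very first factor is of `Q̃`-type (coded 0). -/
def phiWord (qr rq : Bool) (gs : List (ℕ × ℕ)) : List (ℕ × Bool) :=
  match mkWord qr rq gs with
  | [] => []
  | (_, b) :: t => (0, b) :: t

open Classical in
/-- The nested sum `Φ_z` attached to a word `w` of (factor type, comparison) pairs:
factor type 0 gives `1/n - 1/(n+z)`, type 1 gives `1/(n+z)`, type 2 gives `1/n`;
comparison `true` means `≥`, `false` means `>`. -/
noncomputable def PhiSum (w : List (ℕ × Bool)) (z : ℂ) : ℂ :=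
  ∑' v : Fin w.length → ℕ,
    if (∀ j, 0 < v j) ∧ (∀ j k : Fin w.length, (k : ℕ) = (j : ℕ) + 1 →
          (if (w.get k).2 then v k ≤ v j else v k < v j))
    then ∏ j : Fin w.length, (if (w.get j).1 = 0 then (1 / (v j : ℂ) - 1 / ((v j : ℂ) + z))
               else if (w.get j).1 = 1 then 1 / ((v j : ℂ) + z)
               else 1 / (v j : ℂ))
    else 0


private lemma aux_summable_pi_prod {g : ℕ → ℝ} (hg : Summable g) (hg0 : ∀ n, 0 ≤ g n) :
    ∀ s : ℕ, Summable (fun v : Fin s → ℕ => ∏ j, g (v j)) := by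
  intro s
  induction s with
  | zero =>
      simp only [Finset.univ_eq_empty, Finset.prod_empty]
      exact Summable.of_finite
  | succ n ih =>
      have h2 : Summable (fun p : ℕ × (Fin n → ℕ) => g p.1 * ∏ j, g (p.2 j)) := by
        apply Summable.mul_of_nonneg hg ih hg0
        intro v
        exact Finset.prod_nonneg fun j _ => hg0 _
      have h3 := (Fin.consEquiv fun _ => ℕ).symm.summable_iff.mpr h2
      exact h3.congr fun v => by
        simp only [Function.comp, Fin.consEquiv, Equiv.coe_fn_symm_mk, Fin.prod_univ_succ]
        rfl

private lemma aux_key_prod {s : ℕ} (w : Fin s → ℝ) (j0 : Fin s)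
    (h1 : ∀ j, 1 ≤ w j) (h0 : ∀ j, w j ≤ w j0) :
    ∏ j, w j ^ (1 + 1/(s:ℝ)) ≤ (w j0)^2 * ∏ j ∈ Finset.univ.erase j0, w j := by
  have hs : s ≠ 0 := by rintro rfl; exact j0.elim0
  have hpos : ∀ j, (0:ℝ) < w j := fun j => lt_of_lt_of_le one_pos (h1 j)
  have hP0 : (0:ℝ) ≤ ∏ j, w j := Finset.prod_nonneg fun j _ => (hpos j).le
  have e1 : ∏ j, w j ^ (1 + 1/(s:ℝ)) = (∏ j, w j) * (∏ j, w j) ^ (1/(s:ℝ)) := by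
    have h : ∀ j : Fin s, w j ^ (1 + 1/(s:ℝ)) = w j * w j ^ (1/(s:ℝ)) := fun j => by
      rw [Real.rpow_add (hpos j), Real.rpow_one]
    rw [Finset.prod_congr rfl fun j _ => h j, Finset.prod_mul_distrib,
      Real.finset_prod_rpow _ _ (fun j _ => (hpos j).le)]
  have hb : ∏ j, w j ≤ w j0 ^ s := by
    calc ∏ j, w j ≤ ∏ _j : Fin s, w j0 :=
          Finset.prod_le_prod (fun j _ => (hpos j).le) (fun j _ => h0 j)
      _ = w j0 ^ s := by simp
  have h2 : (∏ j, w j) ^ (1/(s:ℝ)) ≤ w j0 := by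
    calc (∏ j, w j) ^ (1/(s:ℝ)) ≤ (w j0 ^ s) ^ (1/(s:ℝ)) :=
          Real.rpow_le_rpow hP0 hb (by positivity)
      _ = w j0 := by rw [one_div, Real.pow_rpow_inv_natCast (hpos j0).le hs]
  calc ∏ j, w j ^ (1 + 1/(s:ℝ)) = (∏ j, w j) * (∏ j, w j) ^ (1/(s:ℝ)) := e1
    _ ≤ (∏ j, w j) * w j0 := mul_le_mul_of_nonneg_left h2 hP0
    _ = (w j0)^2 * ∏ j ∈ Finset.univ.erase j0, w j := by
        rw [← Finset.mul_prod_erase Finset.univ w (Finset.mem_univ j0)]; ring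

/-- For every multi-index `α` there is a constant `A > 0` with
`|G_α(z)| ≤ A|z|` whenever `Re z ≥ 0`. -/
theorem Gfun_linear_bound (α : List ℕ) (hα : MIdx α) :
    ∃ A : ℝ, 0 < A ∧ ∀ z : ℂ, 0 ≤ z.re →
      ‖Gfun α z‖ ≤ A * ‖z‖ := by
  classical
  have hs : 0 < α.sum := by
    obtain ⟨h1, h2⟩ := hα
    cases α with
    | nil => exact absurd rfl h1
    | cons a t =>
        have := h2 a (by simp)
        simp only [List.sum_cons]
        omega
  set s := α.sum with hsdef
  set p : ℝ := 1 + 1 / s with hpdef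
  have hsR : (0:ℝ) < s := by exact_mod_cast hs
  have hp1 : 1 < p := by
    have : 0 < 1 / (s:ℝ) := by positivity
    simp only [hpdef]; linarith
  set g : ℕ → ℝ := fun n => 1 / (n:ℝ) ^ p with hgdef
  have hg0 : ∀ n, 0 ≤ g n := fun n => by
    simp only [hgdef]; positivity
  have hgs : Summable g := Real.summable_one_div_nat_rpow.mpr hp1
  have hG : Summable (fun v : Fin s → ℕ => ∏ j, g (v j)) := aux_summable_pi_prod hgs hg0 s
  set C := ∑' v : Fin s → ℕ, ∏ j, g (v j) with hC
  have hC0 : 0 ≤ C := tsum_nonneg fun v => Finset.prod_nonneg fun j _ => hg0 _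
  refine ⟨C + 1, by linarith, fun z hz => ?_⟩
  have key : ∀ v : Fin s → ℕ,
      ‖Gterm α z v‖ ≤ ‖z‖ * ∏ j, g (v j) := by
    intro v
    have hrhs0 : 0 ≤ ‖z‖ * ∏ j, g (v j) :=
      mul_nonneg (norm_nonneg _) (Finset.prod_nonneg fun j _ => hg0 _)
    rw [Gterm]
    split_ifs with hcond
    · obtain ⟨hpos, hchain⟩ := hcond
      set j0 : Fin s := ⟨0, hs⟩ with hj0
      have hstep : ∀ j k : Fin s, (k:ℕ) = (j:ℕ) + 1 → v k ≤ v j := by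
        intro j k hk
        have h := hchain j k hk
        split_ifs at h
        · exact h
        · exact h.le
      have hmax' : ∀ m, ∀ hm : m < s, v ⟨m, hm⟩ ≤ v j0 := by
        intro m
        induction m with
        | zero => intro hm; exact le_refl _
        | succ n ihn =>
            intro hm
            have hn : n < s := Nat.lt_of_succ_lt hm
            exact le_trans (hstep ⟨n, hn⟩ ⟨n+1, hm⟩ rfl) (ihn hn)
      have hmax : ∀ j : Fin s, v j ≤ v j0 := fun j => by
        have h := hmax' j.1 j.2
        simpa using h
      have hv1 : ∀ j, (1:ℝ) ≤ (v j : ℝ) := fun j => by exact_mod_cast hpos j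
      have hvpos : ∀ j, (0:ℝ) < (v j : ℝ) := fun j => lt_of_lt_of_le one_pos (hv1 j)
      have habs : ∀ j : Fin s, (v j : ℝ) ≤ ‖(v j : ℂ) + z‖ := by
        intro j
        calc (v j : ℝ) ≤ ((v j : ℂ) + z).re := by
              simp only [Complex.add_re, Complex.natCast_re]
              linarith
          _ ≤ ‖(v j : ℂ) + z‖ := Complex.re_le_norm _
      have habs_pos : ∀ j : Fin s, (0:ℝ) < ‖(v j : ℂ) + z‖ :=
        fun j => lt_of_lt_of_le (hvpos j) (habs j)
      have hne : ∀ j : Fin s, ((v j : ℂ) + z) ≠ 0 := fun j h => by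
        have h2 := habs_pos j
        rw [h] at h2
        simp at h2
      have hvne : ∀ j : Fin s, ((v j : ℂ)) ≠ 0 := fun j => by
        exact_mod_cast Nat.cast_ne_zero.mpr (hpos j).ne'
      set F : Fin s → ℝ := fun j =>
        if (j:ℕ) = 0 then ‖z‖ / (v j : ℝ)^2 else 1 / (v j : ℝ) with hF
      have hfac : ∀ j : Fin s,
          ‖(if (j:ℕ) = 0 then (1 / (v j : ℂ) - 1 / ((v j : ℂ) + z))
             else if (j:ℕ) ∈ boundarySet α then 1 / ((v j : ℂ) + z)
             else 1 / (v j : ℂ))‖ ≤ F j := by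
        intro j
        rcases eq_or_ne (j:ℕ) 0 with h0 | h0
        · simp only [hF, h0, if_true]
          have heq : 1 / (v j : ℂ) - 1 / ((v j : ℂ) + z)
              = z / ((v j : ℂ) * ((v j : ℂ) + z)) := by
            rw [div_sub_div _ _ (hvne j) (hne j)]
            congr 1
            ring
          rw [heq, norm_div, norm_mul, norm_natCast]
          have h2 : ((v j:ℝ))^2 ≤ (v j : ℝ) * ‖(v j:ℂ) + z‖ := by
            rw [sq]
            exact mul_le_mul_of_nonneg_left (habs j) (hvpos j).le
          exact div_le_div_of_nonneg_left (norm_nonneg z) (pow_pos (hvpos j) 2) h2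
        · simp only [hF, h0, if_false]
          split_ifs with hb
          · rw [norm_div, norm_one]
            exact one_div_le_one_div_of_le (hvpos j) (habs j)
          · rw [norm_div, norm_one, norm_natCast]
      have hkey : ∏ j, ((v j : ℝ)) ^ (1 + 1/(s:ℝ))
          ≤ ((v j0 : ℝ))^2 * ∏ j ∈ Finset.univ.erase j0, (v j : ℝ) :=
        aux_key_prod (fun j => (v j : ℝ)) j0 hv1 (fun j => Nat.cast_le.mpr (hmax j))
      have hprodpos : 0 < ∏ j, (v j:ℝ) ^ p :=
        Finset.prod_pos fun j _ => Real.rpow_pos_of_pos (hvpos j) _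
      have hinner : (1 / (v j0:ℝ)^2) * ∏ j ∈ Finset.univ.erase j0, (1 / (v j:ℝ))
          ≤ ∏ j, g (v j) := by
        have e2 : ∏ j, g (v j) = (∏ j, (v j:ℝ)^p)⁻¹ := by
          simp only [hgdef, one_div]
          rw [← Finset.prod_inv_distrib]
        have e3 : (1 / (v j0:ℝ)^2) * ∏ j ∈ Finset.univ.erase j0, (1/(v j:ℝ))
            = ((v j0:ℝ)^2 * ∏ j ∈ Finset.univ.erase j0, (v j:ℝ))⁻¹ := by
          simp only [one_div]
          rw [mul_inv, ← Finset.prod_inv_distrib]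
        rw [e2, e3]
        exact inv_anti₀ hprodpos hkey
      calc ‖(∏ j : Fin s,
            (if (j:ℕ) = 0 then (1 / (v j : ℂ) - 1 / ((v j : ℂ) + z))
             else if (j:ℕ) ∈ boundarySet α then 1 / ((v j : ℂ) + z)
             else 1 / (v j : ℂ)))‖
          = ∏ j : Fin s, ‖
            (if (j:ℕ) = 0 then (1 / (v j : ℂ) - 1 / ((v j : ℂ) + z))
             else if (j:ℕ) ∈ boundarySet α then 1 / ((v j : ℂ) + z)
             else 1 / (v j : ℂ))‖ := norm_prod _ _
        _ ≤ ∏ j, F j :=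
            Finset.prod_le_prod (fun j _ => norm_nonneg _) (fun j _ => hfac j)
        _ = F j0 * ∏ j ∈ Finset.univ.erase j0, F j :=
            (Finset.mul_prod_erase _ _ (Finset.mem_univ j0)).symm
        _ = (‖z‖ / (v j0:ℝ)^2) * ∏ j ∈ Finset.univ.erase j0, (1/(v j:ℝ)) := by
            have hFj0 : F j0 = ‖z‖ / (v j0:ℝ)^2 := by simp [hF, hj0]
            have hFe : ∀ j ∈ Finset.univ.erase j0, F j = 1/(v j:ℝ) := by
              intro j hj
              have hj0' : (j:ℕ) ≠ 0 := by
                intro h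
                exact (Finset.mem_erase.mp hj).1 (Fin.ext (by simp [h, hj0]))
              simp [hF, hj0']
            rw [hFj0, Finset.prod_congr rfl hFe]
        _ = ‖z‖ * ((1 / (v j0:ℝ)^2) * ∏ j ∈ Finset.univ.erase j0, (1/(v j:ℝ))) := by
            ring
        _ ≤ ‖z‖ * ∏ j, g (v j) :=
            mul_le_mul_of_nonneg_left hinner (norm_nonneg z)
    · simpa using hrhs0
  have hnormsum : Summable (fun v : Fin s → ℕ => ‖Gterm α z v‖) := by
    apply Summable.of_nonneg_of_le (fun v => norm_nonneg _) (fun v => ?_)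
      (hG.mul_left (‖z‖))
    exact key v
  calc ‖Gfun α z‖ = ‖∑' v : Fin s → ℕ, Gterm α z v‖ := by
        rw [Gfun]
    _ ≤ ∑' v : Fin s → ℕ, ‖Gterm α z v‖ := norm_tsum_le_tsum_norm hnormsum
    _ ≤ ∑' v : Fin s → ℕ, ‖z‖ * ∏ j, g (v j) := by
        refine Summable.tsum_le_tsum (fun v => ?_) hnormsum (hG.mul_left _)
        exact key v
    _ = ‖z‖ * C := by rw [tsum_mul_left]
    _ ≤ (C + 1) * ‖z‖ := by
        rw [mul_comm]
        exact mul_le_mul_of_nonneg_right (by linarith) (norm_nonneg z)
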